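/- There exist real constants c₁, c₄ such that for all ξ₁, ξ₂ ∈ ℝ, (1/2)ξ₂² + (3c₁ + 1/4)ξ₁²ξ₂ + (−(5/2)c₁ − 1/2)ξ₁⁴ + (2c₄ + δ/2)ξ₁ξ₂ + (−(3/2)c₄ − (3δ/8))ξ₁³ ≥ 0, for every δ ≥ 0, when α = 1/2. -/
import Mathlib

theorem stmt_2 (δ : ℝ) (hδ : 0 ≤ δ) :
    ∃ c₁ c₄ : ℝ, ∀ ξ₁ ξ₂ : ℝ,
      (1 / 2) * ξ₂ ^ 2 + (3 * c₁ + 1 / 4) * ξ₁ ^ 2 * ξ₂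
        + (-(5 / 2) * c₁ - 1 / 2) * ξ₁ ^ 4
        + (2 * c₄ + δ / 2) * ξ₁ * ξ₂
        + (-(3 / 2) * c₄ - 3 * δ / 8) * ξ₁ ^ 3 ≥ 0 := by
  refine ⟨-1/3, -δ/4, fun ξ₁ ξ₂ => ?_⟩
  nlinarith [sq_nonneg (ξ₂ - 3/4 * ξ₁ ^ 2), sq_nonneg ξ₁, sq_nonneg (ξ₁ ^ 2)]
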